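/- Let L ≤ U be real numbers and define g(α) = 1 - f(L)f(U) + α(f(L)+f(U)) - (1 + f(L)f(U)) sqrt(1+α^2), with f(x) = (sqrt(1+x^2)-1)/x for x ≠ 0 and f(0)=0. Then g(α) ≥ 0 for all α with L ≤ α ≤ U. -/

import Mathlib

noncomputable def f (x : ℝ) : ℝ := if x = 0 then 0 else (Real.sqrt (1 + x ^ 2) - 1) / x

lemma sqrt_sq' (x : ℝ) : Real.sqrt (1 + x ^ 2) ^ 2 = 1 + x ^ 2 :=
  Real.sq_sqrt (by positivity)

lemma sqrt_ge_one (x : ℝ) : 1 ≤ Real.sqrt (1 + x ^ 2) := by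
  have := Real.sqrt_le_sqrt (show (1:ℝ) ≤ 1 + x ^ 2 by nlinarith [sq_nonneg x])
  simpa using this

lemma f_eq (x : ℝ) : f x = x / (1 + Real.sqrt (1 + x ^ 2)) := by
  unfold f
  by_cases hx : x = 0
  · simp [hx]
  · rw [if_neg hx]
    have hs2 := sqrt_sq' x
    have hs1 := sqrt_ge_one x
    rw [div_eq_div_iff hx (by linarith)]
    nlinarith

lemma f_sq_lt_one (x : ℝ) : f x ^ 2 < 1 := by
  rw [f_eq]
  have hs2 := sqrt_sq' x
  have hs1 := sqrt_ge_one x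
  rw [div_pow, div_lt_one (by positivity)]
  nlinarith

lemma f_idA (x : ℝ) : Real.sqrt (1 + x ^ 2) * (1 - f x ^ 2) = 1 + f x ^ 2 := by
  rw [f_eq]
  have hs2 := sqrt_sq' x
  have hs1 := sqrt_ge_one x
  have h0 : (1 + Real.sqrt (1 + x ^ 2)) ≠ 0 := by linarith
  field_simp
  nlinarith

lemma f_idB (x : ℝ) : x * (1 - f x ^ 2) = 2 * f x := by
  rw [f_eq]
  have hs2 := sqrt_sq' x
  have hs1 := sqrt_ge_one x
  have h0 : (1 + Real.sqrt (1 + x ^ 2)) ≠ 0 := by linarith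
  field_simp
  linear_combination x * hs2

lemma f_mono {x y : ℝ} (hxy : x ≤ y) : f x ≤ f y := by
  by_contra h
  push_neg at h
  have hax := f_sq_lt_one x
  have hay := f_sq_lt_one y
  have hbx := f_idB x
  have hby := f_idB y
  nlinarith [mul_pos (sub_pos.2 hax) (sub_pos.2 hay), sq_nonneg (f x + f y),
    sq_nonneg (f x - f y), mul_pos (sub_pos.2 h) (show (0:ℝ) < 1 + f x * f y by nlinarith [sq_nonneg (f x + f y)])]

theorem g_nonneg (L U α : ℝ) (hLU : L ≤ U) (h1 : L ≤ α) (h2 : α ≤ U) :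
    1 - f L * f U + α * (f L + f U) - (1 + f L * f U) * Real.sqrt (1 + α ^ 2) ≥ 0 := by
  have hac : f L ≤ f α := f_mono h1
  have hcb : f α ≤ f U := f_mono h2
  have hc2 : f α ^ 2 < 1 := f_sq_lt_one α
  have hA := f_idA α
  have hB := f_idB α
  have hpos : (0:ℝ) < 1 - f α ^ 2 := by linarith
  have key : (1 - f L * f U + α * (f L + f U) - (1 + f L * f U) * Real.sqrt (1 + α ^ 2)) * (1 - f α ^ 2)
      = 2 * (f α - f L) * (f U - f α) := by
    linear_combination (f L + f U) * hB - (1 + f L * f U) * hA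
  nlinarith [mul_nonneg (sub_nonneg.2 hac) (sub_nonneg.2 hcb), key, hpos]
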